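/- arXiv:1704.07977 — 3 statements merged into one kernel-verified Lean document; each statement's English description precedes it below -/
import Mathlib

section
/- Let Z_1,…,Z_N be i.i.d. real random variables with continuous distribution function F, with N = m+n odd, and let Z be the ((N+1)/2)-th order statistic of the combined sample. Then the statistic M† = #{ i ≤ m : Z_i < Z } (the number of the first m observations lying strictly below the combined sample median) follows the hypergeometric distribution HG(N, m, (N−1)/2): for every integer u with 0 ≤ u ≤ (N−1)/2, P(M† = u) = C(m,u) C(n, (N−1)/2 − u) / C(N, (N−1)/2). In particular E[M†] = (m/2)(1 − 1/(m+n)). -/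
open MeasureTheory ProbabilityTheory Filter Asymptotics Set
open scoped Topology ENNReal NNReal BigOperators

noncomputable section

/-- The `k`-th order statistic (1-indexed) of a finite sample: the smallest point `x`
such that at least `k` of the observations are `≤ x`. -/
def orderStat {N : ℕ} (w : Fin N → ℝ) (k : ℕ) : ℝ :=
  sInf {x : ℝ | k ≤ (Finset.univ.filter fun i => w i ≤ x).card}

/-- The sample median: the `((N+1)/2)`-th order statistic for odd `N`, the average of the
`(N/2)`-th and `(N/2+1)`-th order statistics for even `N`. -/
def sampleMedian {N : ℕ} (w : Fin N → ℝ) : ℝ :=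
  if N % 2 = 1 then orderStat w ((N + 1) / 2)
  else (orderStat w (N / 2) + orderStat w (N / 2 + 1)) / 2

/-- The measure on `ℝ` with Lebesgue density `f`. -/
def densMeasure (f : ℝ → ℝ) : Measure ℝ :=
  MeasureTheory.volume.withDensity fun x => ENNReal.ofReal (f x)

/-- Joint law of the two independent samples: `X_1, …, X_m` i.i.d. with density `f`
and `Y_1, …, Y_n` i.i.d. with density `f(· - θ)`, all independent. -/
def twoSampleLaw (f : ℝ → ℝ) (m n : ℕ) (θ : ℝ) :
    Measure ((Fin m → ℝ) × (Fin n → ℝ)) :=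
  (Measure.pi fun _ : Fin m => densMeasure f).prod
    (Measure.pi fun _ : Fin n => (densMeasure f).map (· + θ))

/-- Integrated kernel `K(t) = ∫_{-∞}^t k(u) du`. -/
def Kfun (k : ℝ → ℝ) (t : ℝ) : ℝ := ∫ u in Set.Iic t, k u

/-- The median test statistic `M† = ∑_{i=1}^m ψ*(Z - X_i)` with `ψ*(x) = 1` for `x > 0`. -/
def MdagStat {m n : ℕ} (p : (Fin m → ℝ) × (Fin n → ℝ)) : ℝ :=
  ∑ i : Fin m, if 0 < sampleMedian (Fin.append p.1 p.2) - p.1 i then (1:ℝ) else 0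

/-- The smoothed median test statistic `M̃ = ∑_{i=1}^m K*((Z - X_i)/h)`. -/
def MtilStat (kstar : ℝ → ℝ) (h : ℝ) {m n : ℕ} (p : (Fin m → ℝ) × (Fin n → ℝ)) : ℝ :=
  ∑ i : Fin m, Kfun kstar ((sampleMedian (Fin.append p.1 p.2) - p.1 i) / h)

/-- The Wilcoxon rank sum statistic `W₂ = ∑_i ∑_j ψ(Y_j - X_i)` with `ψ(x) = 1` for `x ≥ 0`. -/
def W2Stat {m n : ℕ} (p : (Fin m → ℝ) × (Fin n → ℝ)) : ℝ :=
  ∑ i : Fin m, ∑ j : Fin n, if 0 ≤ p.2 j - p.1 i then (1:ℝ) else 0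

/-- The smoothed Wilcoxon statistic `W̃₂ = ∑_i ∑_j K((Y_j - X_i)/h)`. -/
def WtilStat (k : ℝ → ℝ) (h : ℝ) {m n : ℕ} (p : (Fin m → ℝ) × (Fin n → ℝ)) : ℝ :=
  ∑ i : Fin m, ∑ j : Fin n, Kfun k ((p.2 j - p.1 i) / h)

/-- The standard normal distribution function `Φ`. -/
def stdGaussCDF (x : ℝ) : ℝ :=
  ((ProbabilityTheory.gaussianReal 0 1) (Set.Iic x)).toReal

/-- The Beta function `B(a,b) = ∫_0^1 t^{a-1} (1-t)^{b-1} dt`. -/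
def Beta (a b : ℝ) : ℝ := ∫ t in Set.Ioo (0:ℝ) 1, t ^ (a - 1) * (1 - t) ^ (b - 1)

namespace Stmt7Aux

variable {N : ℕ}

def cnt (w : Fin N → ℝ) (t : ℝ) : ℕ := (Finset.univ.filter fun i => w i ≤ t).card

lemma cnt_mono (w : Fin N → ℝ) {s t : ℝ} (h : s ≤ t) : cnt w s ≤ cnt w t :=
  Finset.card_le_card (Finset.monotone_filter_right _ fun i _ hi => le_trans hi h)

lemma orderStat_le_iff {w : Fin N → ℝ} {r : ℕ} (hr1 : 1 ≤ r) (hrN : r ≤ N) (t : ℝ) :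
    orderStat w r ≤ t ↔ r ≤ cnt w t := by
  have hNpos : 0 < N := lt_of_lt_of_le hr1 hrN
  have : Nonempty (Fin N) := ⟨⟨0, hNpos⟩⟩
  set T : Set ℝ := {x : ℝ | r ≤ cnt w x} with hT
  have hs : (Finset.univ.image w).Nonempty := by
    simp [Finset.univ_nonempty]
  -- T nonempty
  have hTne : T.Nonempty := by
    refine ⟨(Finset.univ.image w).max' hs, ?_⟩
    have : (Finset.univ.filter fun i => w i ≤ (Finset.univ.image w).max' hs) = Finset.univ := by
      ext i
      simp only [Finset.mem_filter, Finset.mem_univ, true_and, iff_true]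
      exact Finset.le_max' _ _ (Finset.mem_image_of_mem w (Finset.mem_univ i))
    simpa [hT, cnt, this] using hrN
  -- T bounded below
  have hTbdd : BddBelow T := by
    refine ⟨(Finset.univ.image w).min' hs, fun x hx => ?_⟩
    have hx' : 1 ≤ (Finset.univ.filter fun i => w i ≤ x).card := le_trans hr1 hx
    obtain ⟨i, hi⟩ := Finset.card_pos.mp (lt_of_lt_of_le Nat.zero_lt_one hx')
    have hwi : w i ≤ x := (Finset.mem_filter.mp hi).2
    exact le_trans (Finset.min'_le _ _ (Finset.mem_image_of_mem w (Finset.mem_univ i))) hwi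
  have hmem : sInf T ∈ T := by
    by_contra hsm
    have hlt : cnt w (sInf T) < r := lt_of_not_ge hsm
    set s' : Finset ℝ := (Finset.univ.image w).filter (fun y => sInf T < y) with hs'
    have hs'ne : s'.Nonempty := by
      by_contra hne
      rw [Finset.not_nonempty_iff_eq_empty] at hne
      have hall : ∀ i, w i ≤ sInf T := by
        intro i
        by_contra hwi
        have : w i ∈ s' := by
          simp [hs', Finset.mem_filter, lt_of_not_ge hwi,
            Finset.mem_image_of_mem w (Finset.mem_univ i)]
        simp [hne] at this
      have : cnt w (sInf T) = N := by
        have : (Finset.univ.filter fun i => w i ≤ sInf T) = Finset.univ := by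
          ext i; simp [hall i]
        simp [cnt, this]
      omega
    have hb : sInf T < s'.min' hs'ne := by
      have := s'.min'_mem hs'ne
      simp only [hs', Finset.mem_filter] at this
      exact this.2
    obtain ⟨x, hxT, hxlt⟩ := (csInf_lt_iff hTbdd hTne).mp hb
    have hcx : cnt w x ≤ cnt w (sInf T) := by
      apply Finset.card_le_card
      intro i hi
      simp only [Finset.mem_filter, Finset.mem_univ, true_and] at hi ⊢
      by_contra hwi
      have hwi' : sInf T < w i := lt_of_not_ge hwi
      have : w i ∈ s' := by
        simp [hs', Finset.mem_filter, hwi', Finset.mem_image_of_mem w (Finset.mem_univ i)]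
      have := Finset.min'_le _ _ this
      linarith [hi, hxlt]
    exact absurd (le_trans hxT hcx) (not_le.mpr hlt)
  constructor
  · intro h
    exact le_trans hmem (cnt_mono w h)
  · intro h
    exact csInf_le hTbdd h

lemma card_below_le {w : Fin N → ℝ} {r : ℕ} (hr1 : 1 ≤ r) (hrN : r ≤ N) :
    (Finset.univ.filter fun i => w i < orderStat w r).card ≤ r - 1 := by
  set B := Finset.univ.filter fun i => w i < orderStat w r with hB
  by_contra h
  have hBcard : r ≤ B.card := by omega
  have hBne : B.Nonempty := Finset.card_pos.mp (by omega)
  set t := (B.image w).max' (hBne.image w) with ht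
  have htlt : t < orderStat w r := by
    have := Finset.max'_mem (B.image w) (hBne.image w)
    simp only [Finset.mem_image] at this
    obtain ⟨i, hiB, hwi⟩ := this
    calc t = w i := hwi.symm
      _ < orderStat w r := (Finset.mem_filter.mp hiB).2
  have hcnt : r ≤ cnt w t := by
    refine le_trans hBcard (Finset.card_le_card ?_)
    intro i hi
    simp only [Finset.mem_filter, Finset.mem_univ, true_and]
    exact Finset.le_max' _ _ (Finset.mem_image_of_mem w hi)
  have := (orderStat_le_iff hr1 hrN t).mpr hcnt
  linarith

lemma card_below_eq {w : Fin N → ℝ} (hw : Function.Injective w) {r : ℕ}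
    (hr1 : 1 ≤ r) (hrN : r ≤ N) :
    (Finset.univ.filter fun i => w i < orderStat w r).card = r - 1 := by
  have hle := card_below_le (w := w) hr1 hrN
  have hcnt : r ≤ cnt w (orderStat w r) :=
    (orderStat_le_iff hr1 hrN _).mp le_rfl
  have hsplit : cnt w (orderStat w r) ≤
      (Finset.univ.filter fun i => w i < orderStat w r).card + 1 := by
    have hsub : (Finset.univ.filter fun i => w i ≤ orderStat w r) ⊆
        (Finset.univ.filter fun i => w i < orderStat w r) ∪
        (Finset.univ.filter fun i => w i = orderStat w r) := by
      intro i hi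
      simp only [Finset.mem_filter, Finset.mem_univ, true_and, Finset.mem_union] at hi ⊢
      rcases lt_or_eq_of_le hi with h | h
      · exact Or.inl h
      · exact Or.inr h
    have hone : (Finset.univ.filter fun i => w i = orderStat w r).card ≤ 1 := by
      refine Finset.card_le_one.mpr fun a ha b hb => ?_
      simp only [Finset.mem_filter] at ha hb
      exact hw (ha.2.trans hb.2.symm)
    calc cnt w (orderStat w r) ≤ _ := Finset.card_le_card hsub
      _ ≤ _ + _ := Finset.card_union_le _ _
      _ ≤ _ + 1 := by omega
  omega

lemma measurable_cntAt (i : Fin N) : Measurable fun w : Fin N → ℝ => cnt w (w i) := by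
  have : (fun w : Fin N → ℝ => cnt w (w i))
      = fun w => ∑ j : Fin N, if w j ≤ w i then 1 else 0 := by
    funext w; rw [cnt, Finset.card_filter]
  rw [this]
  exact Finset.measurable_sum _ fun j _ =>
    Measurable.ite (measurableSet_le (measurable_pi_apply j) (measurable_pi_apply i))
      measurable_const measurable_const

lemma atomless_of_cont (μ : Measure ℝ) [IsProbabilityMeasure μ]
    (h : Continuous fun x => (μ (Set.Iic x)).toReal) (x : ℝ) : μ {x} = 0 := by
  have hle : μ (Set.Iic x) ≤ μ (Set.Iio x) := by
    have htend : Tendsto (fun n : ℕ => (μ (Set.Iic (x - 1/(n+1)))).toReal) atTop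
        (𝓝 ((μ (Set.Iic x)).toReal)) := by
      have : Tendsto (fun n : ℕ => x - 1/(n+1 : ℝ)) atTop (𝓝 x) := by
        have := tendsto_one_div_add_atTop_nhds_zero_nat (𝕜 := ℝ)
        have h2 : Tendsto (fun n : ℕ => x - 1/(n+1 : ℝ)) atTop (𝓝 (x - 0)) :=
          Tendsto.const_sub _ this
        simpa using h2
      exact (h.tendsto x).comp this
    have hb : ∀ n : ℕ, (μ (Set.Iic (x - 1/(n+1)))).toReal ≤ (μ (Set.Iio x)).toReal := by
      intro n
      apply ENNReal.toReal_mono (measure_ne_top μ _)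
      apply measure_mono
      intro y hy
      simp only [Set.mem_Iic] at hy
      simp only [Set.mem_Iio]
      have : (0:ℝ) < 1/(n+1 : ℝ) := by positivity
      linarith
    have := le_of_tendsto htend (Eventually.of_forall hb)
    exact (ENNReal.toReal_le_toReal (measure_ne_top μ _) (measure_ne_top μ _)).mp this
  have : μ {x} = μ (Set.Iic x \ Set.Iio x) := by rw [Set.Iic_sdiff_Iio_same]
  rw [this, measure_diff (Set.Iio_subset_Iic_self) measurableSet_Iio.nullMeasurableSet
    (measure_ne_top μ _)]
  exact tsub_eq_zero_of_le hle

lemma diag_null (μ : Measure ℝ) [IsProbabilityMeasure μ]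
    (hatom : ∀ x : ℝ, μ {x} = 0) {i j : Fin N} (hij : i ≠ j) :
    (Measure.pi fun _ : Fin N => μ) {w | w i = w j} = 0 := by
  classical
  have hmeas : Measurable fun w : Fin N → ℝ => (w i, w j) :=
    (measurable_pi_apply i).prodMk (measurable_pi_apply j)
  have hmap : (Measure.pi fun _ : Fin N => μ).map (fun w => (w i, w j)) = μ.prod μ := by
    refine (Measure.prod_eq fun s t hs ht => ?_).symm
    rw [Measure.map_apply hmeas (hs.prod ht)]
    have hpre : (fun w : Fin N → ℝ => (w i, w j)) ⁻¹' (s ×ˢ t)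
        = Set.pi Set.univ (fun x => if x = i then s else if x = j then t else Set.univ) := by
      ext w
      simp only [Set.mem_preimage, Set.mem_prod, Set.mem_pi, Set.mem_univ, true_implies]
      constructor
      · intro ⟨h1, h2⟩ x
        by_cases hxi : x = i
        · subst hxi; simp [h1]
        · by_cases hxj : x = j
          · subst hxj; simp [hxi, h2]
          · simp [hxi, hxj]
      · intro hall
        constructor
        · have := hall i; simpa using this
        · have := hall j; simpa [Ne.symm hij] using this
    rw [hpre, Measure.pi_pi]
    have : ∀ x : Fin N, x ∉ ({i, j} : Finset (Fin N)) →
        μ ((fun x => if x = i then s else if x = j then t else Set.univ) x) = 1 := by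
      intro x hx
      simp only [Finset.mem_insert, Finset.mem_singleton, not_or] at hx
      simp [hx.1, hx.2]
    rw [← Finset.prod_subset (Finset.subset_univ ({i,j} : Finset (Fin N)))
      (fun x _ hx => this x hx)]
    rw [Finset.prod_pair hij]
    simp [hij, Ne.symm hij]
  have hdiagmeas : MeasurableSet {p : ℝ × ℝ | p.1 = p.2} :=
    measurableSet_eq_fun measurable_fst measurable_snd
  have : {w : Fin N → ℝ | w i = w j} = (fun w => (w i, w j)) ⁻¹' {p : ℝ × ℝ | p.1 = p.2} := rfl
  rw [this, ← Measure.map_apply hmeas hdiagmeas, hmap]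
  rw [Measure.prod_apply hdiagmeas]
  have h0 : ∀ x : ℝ, μ (Prod.mk x ⁻¹' {p : ℝ × ℝ | p.1 = p.2}) = 0 := by
    intro x
    have h1 : Prod.mk x ⁻¹' {p : ℝ × ℝ | p.1 = p.2} = {x} := by
      ext y; simp [eq_comm]
    rw [h1]; exact hatom x
  calc ∫⁻ x, μ (Prod.mk x ⁻¹' {p : ℝ × ℝ | p.1 = p.2}) ∂μ = ∫⁻ _, 0 ∂μ :=
        lintegral_congr h0
    _ = 0 := lintegral_zero

lemma comp_perm_preserving (μ : Measure ℝ) [IsProbabilityMeasure μ] (σ : Equiv.Perm (Fin N)) :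
    MeasurePreserving (fun w : Fin N → ℝ => w ∘ σ)
      (Measure.pi fun _ : Fin N => μ) (Measure.pi fun _ : Fin N => μ) := by
  have h := (measurePreserving_piCongrLeft (fun _ : Fin N => μ) σ).symm
  have : ⇑(MeasurableEquiv.piCongrLeft (fun _ : Fin N => ℝ) σ).symm
      = fun w : Fin N → ℝ => w ∘ σ := by
    funext w
    funext a
    rfl
  rwa [this] at h


lemma exists_perm_mem_iff {α : Type*} [Fintype α] [DecidableEq α] {S T : Finset α}
    (h : S.card = T.card) : ∃ σ : Equiv.Perm α, ∀ i, σ i ∈ T ↔ i ∈ S := by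
  classical
  have hc : (fun x => ¬ x ∈ S) = fun x => x ∈ Sᶜ := by
    funext x; simp [Finset.mem_compl]
  have hcc : Sᶜ.card = Tᶜ.card := by simp [Finset.card_compl, h]
  let e1 : {x // x ∈ S} ≃ {x // x ∈ T} := Finset.equivOfCardEq h
  let e2 : {x // x ∈ Sᶜ} ≃ {x // x ∈ Tᶜ} := Finset.equivOfCardEq hcc
  let e2' : {x // ¬ x ∈ S} ≃ {x // ¬ x ∈ T} :=
    ((Equiv.subtypeEquivRight fun x => (Finset.mem_compl).symm).trans e2).trans
      (Equiv.subtypeEquivRight fun x => Finset.mem_compl)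
  refine ⟨(Equiv.sumCompl (· ∈ S)).symm.trans ((e1.sumCongr e2').trans
    (Equiv.sumCompl (· ∈ T))), fun i => ?_⟩
  by_cases hi : i ∈ S
  · have h1 : (Equiv.sumCompl (· ∈ S)).symm i = Sum.inl ⟨i, hi⟩ := by
      rw [Equiv.symm_apply_eq, Equiv.sumCompl_apply_inl]
    simp only [Equiv.trans_apply, h1, Equiv.sumCongr_apply, Sum.map_inl,
      Equiv.sumCompl_apply_inl]
    exact iff_of_true (e1 ⟨i, hi⟩).2 hi
  · have h1 : (Equiv.sumCompl (· ∈ S)).symm i = Sum.inr ⟨i, hi⟩ := by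
      rw [Equiv.symm_apply_eq, Equiv.sumCompl_apply_inr]
    simp only [Equiv.trans_apply, h1, Equiv.sumCongr_apply, Sum.map_inr,
      Equiv.sumCompl_apply_inr]
    exact iff_of_false (e2' ⟨i, hi⟩).2 hi

lemma counting {N m n : ℕ} (hN : N = m + n) (k u : ℕ) (hu : u ≤ k) :
    (((Finset.powersetCard k (Finset.univ : Finset (Fin N)))).filter
      (fun S => (S.filter (fun i : Fin N => (i : ℕ) < m)).card = u)).card
    = m.choose u * n.choose (k - u) := by
  classical
  set A : Finset (Fin N) := Finset.univ.filter (fun i : Fin N => (i : ℕ) < m) with hA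
  have hmN : m ≤ N := by omega
  have hAcard : A.card = m := by
    have : A = Finset.map (Fin.castLEEmb hmN) Finset.univ := by
      ext i
      simp only [hA, Finset.mem_filter, Finset.mem_univ, true_and, Finset.mem_map]
      constructor
      · intro hi
        exact ⟨⟨(i : ℕ), hi⟩, by simp [Fin.castLEEmb, Fin.ext_iff]⟩
      · rintro ⟨j, -, rfl⟩
        simpa [Fin.castLEEmb] using j.2
    rw [this, Finset.card_map, Finset.card_univ, Fintype.card_fin]
  have hAccard : Aᶜ.card = n := by
    rw [Finset.card_compl, hAcard]
    simp [hN, Fintype.card_fin]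
  have key : (((Finset.powersetCard k (Finset.univ : Finset (Fin N)))).filter
      (fun S => (S.filter (fun i : Fin N => (i : ℕ) < m)).card = u)).card
      = ((Finset.powersetCard u A) ×ˢ (Finset.powersetCard (k - u) Aᶜ)).card := by
    refine Finset.card_bij' (fun S _ => (S.filter (fun i : Fin N => (i : ℕ) < m),
        S.filter (fun i : Fin N => ¬ (i : ℕ) < m))) (fun P _ => P.1 ∪ P.2)
        ?hi ?hj ?left ?right
    case hi =>
      intro S hS
      simp only [Finset.mem_filter, Finset.mem_powersetCard] at hS
      obtain ⟨⟨-, hcard⟩, hu'⟩ := hS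
      simp only [Finset.mem_product, Finset.mem_powersetCard]
      refine ⟨⟨fun i hi => ?_, hu'⟩, fun i hi => ?_, ?_⟩
      · simp only [Finset.mem_filter] at hi
        simp [hA, hi.2]
      · simp only [Finset.mem_filter] at hi
        simp only [Finset.mem_compl, hA, Finset.mem_filter, Finset.mem_univ, true_and]
        exact hi.2
      · have h3 : (S.filter (fun i : Fin N => (i : ℕ) < m)).card
            + (S.filter (fun i : Fin N => ¬ (i : ℕ) < m)).card = S.card :=
          Finset.card_filter_add_card_filter_not _
        omega
    case hj =>
      intro P hP
      simp only [Finset.mem_product, Finset.mem_powersetCard] at hP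
      obtain ⟨⟨hP1, hP1c⟩, hP2, hP2c⟩ := hP
      have hd : Disjoint P.1 P.2 := by
        refine Finset.disjoint_left.mpr fun i hi1 hi2 => ?_
        have h1 := hP1 hi1
        have h2 := hP2 hi2
        rw [Finset.mem_compl] at h2
        exact h2 h1
      simp only [Finset.mem_filter, Finset.mem_powersetCard]
      have hfP1 : (P.1 ∪ P.2).filter (fun i : Fin N => (i : ℕ) < m) = P.1 := by
        rw [Finset.filter_union]
        have e1 : P.1.filter (fun i : Fin N => (i : ℕ) < m) = P.1 :=
          Finset.filter_true_of_mem fun i hi => by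
            have := hP1 hi; simp only [hA, Finset.mem_filter] at this; exact this.2
        have e2 : P.2.filter (fun i : Fin N => (i : ℕ) < m) = ∅ :=
          Finset.filter_false_of_mem fun i hi => by
            have := hP2 hi
            simp only [Finset.mem_compl, hA, Finset.mem_filter, Finset.mem_univ,
              true_and] at this
            exact this
        rw [e1, e2, Finset.union_empty]
      refine ⟨⟨Finset.subset_univ _, ?_⟩, by rw [hfP1, hP1c]⟩
      rw [Finset.card_union_of_disjoint hd, hP1c, hP2c]
      omega
    case left =>
      intro S hS
      exact Finset.filter_union_filter_not_eq _ S
    case right =>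
      intro P hP
      simp only [Finset.mem_product, Finset.mem_powersetCard] at hP
      obtain ⟨⟨hP1, hP1c⟩, hP2, hP2c⟩ := hP
      have hfP1 : (P.1 ∪ P.2).filter (fun i : Fin N => (i : ℕ) < m) = P.1 := by
        rw [Finset.filter_union]
        have e1 : P.1.filter (fun i : Fin N => (i : ℕ) < m) = P.1 :=
          Finset.filter_true_of_mem fun i hi => by
            have := hP1 hi; simp only [hA, Finset.mem_filter] at this; exact this.2
        have e2 : P.2.filter (fun i : Fin N => (i : ℕ) < m) = ∅ :=
          Finset.filter_false_of_mem fun i hi => by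
            have := hP2 hi
            simp only [Finset.mem_compl, hA, Finset.mem_filter, Finset.mem_univ,
              true_and] at this
            exact this
        rw [e1, e2, Finset.union_empty]
      have hfP2 : (P.1 ∪ P.2).filter (fun i : Fin N => ¬ (i : ℕ) < m) = P.2 := by
        rw [Finset.filter_union]
        have e1 : P.1.filter (fun i : Fin N => ¬ (i : ℕ) < m) = ∅ :=
          Finset.filter_false_of_mem fun i hi => by
            have := hP1 hi; simp only [hA, Finset.mem_filter] at this
            exact not_not_intro this.2
        have e2 : P.2.filter (fun i : Fin N => ¬ (i : ℕ) < m) = P.2 :=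
          Finset.filter_true_of_mem fun i hi => by
            have := hP2 hi
            simp only [Finset.mem_compl, hA, Finset.mem_filter, Finset.mem_univ,
              true_and] at this
            exact this
        rw [e1, e2, Finset.empty_union]
      rw [Prod.ext_iff]
      exact ⟨hfP1, hfP2⟩
  rw [key, Finset.card_product, Finset.card_powersetCard, Finset.card_powersetCard,
    hAcard, hAccard]


lemma cnt_comp_perm (w : Fin N → ℝ) (σ : Equiv.Perm (Fin N)) (t : ℝ) :
    cnt (w ∘ σ) t = cnt w t := by
  unfold cnt
  apply Finset.card_bij (fun i _ => σ i)
  · intro a ha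
    simp only [Finset.mem_filter, Finset.mem_univ, true_and, Function.comp] at ha ⊢
    exact ha
  · intro a _ b _ hab
    exact σ.injective hab
  · intro b hb
    refine ⟨σ.symm b, ?_, by simp⟩
    simp only [Finset.mem_filter, Finset.mem_univ, true_and, Function.comp] at hb ⊢
    simpa using hb

lemma orderStat_comp_perm (w : Fin N → ℝ) (σ : Equiv.Perm (Fin N)) (r : ℕ) :
    orderStat (w ∘ σ) r = orderStat w r := by
  have h : ∀ t : ℝ, (Finset.univ.filter fun i => (w ∘ σ) i ≤ t).card
      = (Finset.univ.filter fun i => w i ≤ t).card := fun t => cnt_comp_perm w σ t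
  unfold orderStat
  congr 1
  ext t
  simp only [Set.mem_setOf_eq, h t]

lemma card_A {m : ℕ} (hmN : m ≤ N) :
    (Finset.univ.filter (fun i : Fin N => (i : ℕ) < m)).card = m := by
  have : (Finset.univ.filter (fun i : Fin N => (i : ℕ) < m))
      = Finset.map (Fin.castLEEmb hmN) Finset.univ := by
    ext i
    simp only [Finset.mem_filter, Finset.mem_univ, true_and, Finset.mem_map]
    constructor
    · intro hi
      exact ⟨⟨(i : ℕ), hi⟩, by simp [Fin.castLEEmb, Fin.ext_iff]⟩
    · rintro ⟨j, -, rfl⟩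
      simpa [Fin.castLEEmb] using j.2
  rw [this, Finset.card_map, Finset.card_univ, Fintype.card_fin]

end Stmt7Aux


/-- For `N = m + n` odd and `Z₁, …, Z_N` i.i.d. with continuous distribution
function, the number `M†` of the first `m` observations lying strictly below the combined
sample median (the `((N+1)/2)`-th order statistic) follows the hypergeometric distribution
`HG(N, m, (N-1)/2)`; in particular `E[M†] = (m/2)(1 - 1/(m+n))`. -/
theorem stmt_7
    (μ : Measure ℝ) [IsProbabilityMeasure μ]
    (hFcont : Continuous fun x => (μ (Set.Iic x)).toReal)
    (m n N : ℕ) (hN : N = m + n) (hodd : N % 2 = 1) :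
    (∀ u : ℕ, u ≤ (N - 1) / 2 →
      ((Measure.pi fun _ : Fin N => μ)
          {w | (Finset.univ.filter fun i : Fin N =>
              (i : ℕ) < m ∧ w i < orderStat w ((N + 1) / 2)).card = u}).toReal
        = (m.choose u * n.choose ((N - 1) / 2 - u) : ℝ) / (N.choose ((N - 1) / 2) : ℝ)) ∧
    (∫ w, ((Finset.univ.filter fun i : Fin N =>
          (i : ℕ) < m ∧ w i < orderStat w ((N + 1) / 2)).card : ℝ)
        ∂(Measure.pi fun _ : Fin N => μ))
      = (m : ℝ) / 2 * (1 - 1 / ((m : ℝ) + n)) := by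
  classical
  obtain ⟨c, hc⟩ : ∃ c, N = 2 * c + 1 := ⟨N / 2, by omega⟩
  have hk2 : (N - 1) / 2 = c := by omega
  have hr2 : (N + 1) / 2 = c + 1 := by omega
  have hmN : m ≤ N := by omega
  have hr1 : 1 ≤ c + 1 := by omega
  have hrN : c + 1 ≤ N := by omega
  have hNpos : 0 < N := by omega
  set π : Measure (Fin N → ℝ) := Measure.pi fun _ : Fin N => μ with hπ
  haveI : IsProbabilityMeasure π := by rw [hπ]; infer_instance
  have hatom : ∀ x : ℝ, μ {x} = 0 := Stmt7Aux.atomless_of_cont μ hFcont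
  set I : Set (Fin N → ℝ) := {w | Function.Injective w} with hIdef
  have hIc : π Iᶜ = 0 := by
    have hsub : Iᶜ ⊆ ⋃ i : Fin N, ⋃ j : Fin N, {w : Fin N → ℝ | i ≠ j ∧ w i = w j} := by
      intro w hw
      simp only [hIdef, Set.mem_compl_iff, Set.mem_setOf_eq, Function.Injective] at hw
      push_neg at hw
      obtain ⟨i, j, hij, hne⟩ := hw
      exact Set.mem_iUnion.mpr ⟨i, Set.mem_iUnion.mpr ⟨j, hne, hij⟩⟩
    refine measure_mono_null hsub ?_
    refine measure_iUnion_null fun i => measure_iUnion_null fun j => ?_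
    by_cases hij : i = j
    · have hempty : {w : Fin N → ℝ | i ≠ j ∧ w i = w j} = ∅ := by
        ext w; simp [hij]
      simp [hempty]
    · exact measure_mono_null (fun w hw => hw.2) (Stmt7Aux.diag_null μ hatom hij)
  have hI1 : ∀ᵐ w ∂π, w ∈ I := by
    rw [MeasureTheory.ae_iff]
    exact hIc
  set SA : Fin N → Set (Fin N → ℝ) := fun i => {w | w i < orderStat w (c + 1)} with hSA
  have hSAmeas : ∀ i, MeasurableSet (SA i) := by
    intro i
    have h1 : SA i = {w : Fin N → ℝ | Stmt7Aux.cnt w (w i) < c + 1} := by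
      ext w
      simp only [hSA, Set.mem_setOf_eq]
      rw [lt_iff_not_ge, ← not_le]
      exact not_congr (Stmt7Aux.orderStat_le_iff hr1 hrN (w i))
    have h2 : {w : Fin N → ℝ | Stmt7Aux.cnt w (w i) < c + 1}
        = (fun w : Fin N → ℝ => Stmt7Aux.cnt w (w i)) ⁻¹' {t | t < c + 1} := rfl
    rw [h1, h2]
    exact (Stmt7Aux.measurable_cntAt i) ((Set.to_countable _).measurableSet)
  set E : Finset (Fin N) → Set (Fin N → ℝ) :=
    fun S => {w | ∀ i : Fin N, (w ∈ SA i ↔ i ∈ S)} with hE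
  have hEmeas : ∀ S, MeasurableSet (E S) := by
    intro S
    have h1 : E S = ⋂ i : Fin N, (if i ∈ S then SA i else (SA i)ᶜ) := by
      ext w
      simp only [hE, Set.mem_setOf_eq, Set.mem_iInter]
      constructor
      · intro h i
        by_cases hi : i ∈ S
        · simp only [hi, if_true]
          exact (h i).mpr hi
        · simp only [hi, if_false, Set.mem_compl_iff]
          intro hw; exact hi ((h i).mp hw)
      · intro h i
        have hh := h i
        by_cases hi : i ∈ S
        · simp only [hi, if_true] at hh
          exact ⟨fun _ => hi, fun _ => hh⟩
        · simp only [hi, if_false, Set.mem_compl_iff] at hh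
          exact ⟨fun hw => absurd hw hh, fun hS => absurd hS hi⟩
    rw [h1]
    refine MeasurableSet.iInter fun i => ?_
    by_cases hi : i ∈ S
    · simp only [hi, if_true]; exact hSAmeas i
    · simp only [hi, if_false]; exact (hSAmeas i).compl
  have hbelow_card : ∀ w ∈ I,
      (Finset.univ.filter fun i => w i < orderStat w (c + 1)).card = c := by
    intro w hw
    have h := Stmt7Aux.card_below_eq hw hr1 hrN
    simpa using h
  have hEtrans : ∀ S T : Finset (Fin N), S.card = T.card → π (E S) = π (E T) := by
    intro S T hST
    obtain ⟨σ, hσ⟩ := Stmt7Aux.exists_perm_mem_iff (S := T) (T := S) hST.symm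
    have hpre : (fun w : Fin N → ℝ => w ∘ σ) ⁻¹' (E T) = E S := by
      ext w
      have hos : orderStat (w ∘ σ) (c + 1) = orderStat w (c + 1) :=
        Stmt7Aux.orderStat_comp_perm w σ (c + 1)
      simp only [hE, Set.mem_preimage, Set.mem_setOf_eq, hSA, Function.comp, hos]
      constructor
      · intro h j
        have h1 := h (σ.symm j)
        rw [Equiv.apply_symm_apply] at h1
        have h2 := hσ (σ.symm j)
        rw [Equiv.apply_symm_apply] at h2
        rw [h1, ← h2]
      · intro h i
        rw [h (σ i), hσ i]
    have hmp := (Stmt7Aux.comp_perm_preserving μ σ).measure_preimage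
      (hEmeas T).nullMeasurableSet
    rw [hpre] at hmp
    exact hmp
  set P := Finset.powersetCard c (Finset.univ : Finset (Fin N)) with hP
  have hcardP : ∀ S ∈ P, S.card = c := by
    intro S hS
    exact (Finset.mem_powersetCard.mp hS).2
  have hcover : ∀ w ∈ I, ∃ S ∈ P, w ∈ E S := by
    intro w hw
    refine ⟨Finset.univ.filter fun i => w i < orderStat w (c + 1), ?_, ?_⟩
    · rw [hP, Finset.mem_powersetCard]
      exact ⟨Finset.subset_univ _, hbelow_card w hw⟩
    · simp only [hE, Set.mem_setOf_eq]
      intro i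
      simp [hSA, Finset.mem_filter]
  have hdisj : ∀ S ∈ P, ∀ T ∈ P, S ≠ T → Disjoint (E S) (E T) := by
    intro S _ T _ hST
    rw [Set.disjoint_left]
    intro w hwS hwT
    apply hST
    simp only [hE, Set.mem_setOf_eq] at hwS hwT
    ext i
    rw [← hwS i, ← hwT i]
  have hmeasI : ∀ Z : Set (Fin N → ℝ), π Z = π (Z ∩ I) := by
    intro Z
    apply le_antisymm
    · calc π Z ≤ π ((Z ∩ I) ∪ (Z ∩ Iᶜ)) := by
            apply measure_mono
            intro w hw
            by_cases hwI : w ∈ I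
            · exact Or.inl ⟨hw, hwI⟩
            · exact Or.inr ⟨hw, hwI⟩
        _ ≤ π (Z ∩ I) + π (Z ∩ Iᶜ) := measure_union_le _ _
        _ ≤ π (Z ∩ I) + π Iᶜ :=
            add_le_add le_rfl (measure_mono Set.inter_subset_right)
        _ = π (Z ∩ I) := by rw [hIc, add_zero]
    · exact measure_mono Set.inter_subset_left
  have hsum1 : ∑ S ∈ P, π (E S) = 1 := by
    have hb : π (⋃ S ∈ P, E S) = ∑ S ∈ P, π (E S) := by
      apply measure_biUnion_finset
      · intro S hS T hT hST
        exact hdisj S hS T hT hST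
      · intro S _
        exact hEmeas S
    rw [← hb]
    have hle1 : π (⋃ S ∈ P, E S) ≤ 1 :=
      le_trans (measure_mono (Set.subset_univ _)) (le_of_eq measure_univ)
    apply le_antisymm hle1
    calc (1 : ℝ≥0∞) = π Set.univ := measure_univ.symm
      _ ≤ π ((⋃ S ∈ P, E S) ∪ Iᶜ) := by
          apply measure_mono
          intro w _
          by_cases hw : w ∈ I
          · obtain ⟨S, hSP, hwS⟩ := hcover w hw
            exact Or.inl (Set.mem_biUnion hSP hwS)
          · exact Or.inr hw
      _ ≤ π (⋃ S ∈ P, E S) + π Iᶜ := measure_union_le _ _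
      _ = π (⋃ S ∈ P, E S) := by rw [hIc, add_zero]
  have hchoose0 : (N.choose c : ℝ≥0∞) ≠ 0 :=
    Nat.cast_ne_zero.mpr (Nat.choose_pos (by omega : c ≤ N)).ne'
  have hchoosetop : (N.choose c : ℝ≥0∞) ≠ ⊤ := ENNReal.natCast_ne_top _
  have hEvalue : ∀ S ∈ P, π (E S) = (N.choose c : ℝ≥0∞)⁻¹ := by
    intro S hS
    have hall : ∑ T ∈ P, π (E T) = (N.choose c : ℝ≥0∞) * π (E S) := by
      rw [Finset.sum_congr rfl (fun T hT => hEtrans T S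
        ((hcardP T hT).trans (hcardP S hS).symm))]
      rw [Finset.sum_const, nsmul_eq_mul]
      congr 1
      rw [hP, Finset.card_powersetCard, Finset.card_univ, Fintype.card_fin]
    have hone : (N.choose c : ℝ≥0∞) * π (E S) = 1 := by rw [← hall, hsum1]
    calc π (E S) = ((N.choose c : ℝ≥0∞)⁻¹ * (N.choose c)) * π (E S) := by
          rw [ENNReal.inv_mul_cancel hchoose0 hchoosetop, one_mul]
      _ = (N.choose c : ℝ≥0∞)⁻¹ * ((N.choose c : ℝ≥0∞) * π (E S)) := by ring
      _ = (N.choose c : ℝ≥0∞)⁻¹ := by rw [hone, mul_one]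
  constructor
  · -- hypergeometric distribution
    intro u hu
    rw [hk2] at hu
    simp only [hk2, hr2]
    set G : Set (Fin N → ℝ) := {w | (Finset.univ.filter fun i : Fin N =>
      (i : ℕ) < m ∧ w i < orderStat w (c + 1)).card = u} with hG
    set Pu := P.filter (fun S => (S.filter (fun i : Fin N => (i : ℕ) < m)).card = u) with hPu
    have hGI : G ∩ I = (⋃ S ∈ Pu, E S) ∩ I := by
      ext w
      constructor
      · rintro ⟨hwG, hwI⟩
        refine ⟨?_, hwI⟩
        set S := Finset.univ.filter fun i => w i < orderStat w (c + 1) with hS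
        have hSP : S ∈ P := by
          rw [hP, Finset.mem_powersetCard]
          exact ⟨Finset.subset_univ _, hbelow_card w hwI⟩
        have hfilter : (Finset.univ.filter fun i : Fin N =>
            (i : ℕ) < m ∧ w i < orderStat w (c + 1)) = S.filter (fun i : Fin N => (i : ℕ) < m) := by
          ext i
          simp only [hS, Finset.mem_filter, Finset.mem_univ, true_and]
          tauto
        have hSPu : S ∈ Pu := by
          rw [hPu, Finset.mem_filter]
          refine ⟨hSP, ?_⟩
          rw [← hfilter]
          exact hwG
        refine Set.mem_biUnion hSPu ?_
        simp only [hE, Set.mem_setOf_eq]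
        intro i
        simp [hSA, hS, Finset.mem_filter]
      · rintro ⟨hwU, hwI⟩
        refine ⟨?_, hwI⟩
        obtain ⟨S, hSPu, hwS⟩ := Set.mem_iUnion₂.mp hwU
        rw [hPu, Finset.mem_filter] at hSPu
        simp only [hE, Set.mem_setOf_eq, hSA] at hwS
        show (Finset.univ.filter fun i : Fin N =>
          (i : ℕ) < m ∧ w i < orderStat w (c + 1)).card = u
        have hfilter : (Finset.univ.filter fun i : Fin N =>
            (i : ℕ) < m ∧ w i < orderStat w (c + 1)) = S.filter (fun i : Fin N => (i : ℕ) < m) := by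
          ext i
          have hwi := hwS i
          simp only [Finset.mem_filter, Finset.mem_univ, true_and]
          constructor
          · intro ⟨h1, h2⟩
            exact ⟨hwi.mp h2, h1⟩
          · intro ⟨h1, h2⟩
            exact ⟨h2, hwi.mpr h1⟩
        rw [hfilter]
        exact hSPu.2
    have hPusub : Pu ⊆ P := by rw [hPu]; exact Finset.filter_subset _ _
    have hGmeas : π G = ∑ S ∈ Pu, π (E S) := by
      rw [hmeasI G, hGI, ← hmeasI (⋃ S ∈ Pu, E S)]
      apply measure_biUnion_finset
      · intro S hS T hT hST
        exact hdisj S (hPusub hS) T (hPusub hT) hST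
      · intro S _
        exact hEmeas S
    have hGval : π G = (Pu.card : ℝ≥0∞) * (N.choose c : ℝ≥0∞)⁻¹ := by
      rw [hGmeas, Finset.sum_congr rfl (fun S hS => hEvalue S (hPusub hS)),
        Finset.sum_const, nsmul_eq_mul]
    have hPucard : Pu.card = m.choose u * n.choose (c - u) := by
      rw [hPu, hP]
      exact Stmt7Aux.counting hN c u hu
    rw [hGval, hPucard, ENNReal.toReal_mul, ENNReal.toReal_inv]
    simp only [ENNReal.toReal_natCast, Nat.cast_mul, ENNReal.toReal_mul, div_eq_mul_inv]
  · -- expectation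
    simp only [hr2]
    set i0 : Fin N := ⟨0, hNpos⟩ with hi0def
    have hSAtrans : ∀ i : Fin N, π (SA i) = π (SA i0) := by
      intro i
      set σ := Equiv.swap i0 i with hσdef
      have hpre : (fun w : Fin N → ℝ => w ∘ σ) ⁻¹' (SA i0) = SA i := by
        ext w
        have hos : orderStat (w ∘ σ) (c + 1) = orderStat w (c + 1) :=
          Stmt7Aux.orderStat_comp_perm w σ (c + 1)
        simp only [hSA, Set.mem_preimage, Set.mem_setOf_eq, Function.comp, hos, hσdef,
          Equiv.swap_apply_left]
        rw [← hσdef, hos]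
      have hmp := (Stmt7Aux.comp_perm_preserving μ σ).measure_preimage
        (hSAmeas i0).nullMeasurableSet
      rw [hpre] at hmp
      exact hmp
    set q : ℝ := (π (SA i0)).toReal with hq
    set Bset : Fin N → Set (Fin N → ℝ) :=
      fun i => {v | (i : ℕ) < m ∧ v ∈ SA i} with hBset
    have hBmeas : ∀ i : Fin N, MeasurableSet (Bset i) := by
      intro i
      by_cases h : (i : ℕ) < m
      · have heq : Bset i = SA i := by
          ext v; simp [hBset, h]
        rw [heq]; exact hSAmeas i
      · have heq : Bset i = ∅ := by
          ext v; simp [hBset, h]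
        rw [heq]; exact MeasurableSet.empty
    -- integral of the full below-count
    have hint_all : ∫ w, ((Finset.univ.filter fun i : Fin N =>
        w i < orderStat w (c + 1)).card : ℝ) ∂π = (c : ℝ) := by
      have hae : (fun w => ((Finset.univ.filter fun i : Fin N =>
          w i < orderStat w (c + 1)).card : ℝ)) =ᵐ[π] fun _ => (c : ℝ) := by
        filter_upwards [hI1] with w hw
        rw [hbelow_card w hw]
      rw [integral_congr_ae hae]
      simp
    have hint_all2 : ∫ w, ((Finset.univ.filter fun i : Fin N =>
        w i < orderStat w (c + 1)).card : ℝ) ∂π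
        = ∑ i : Fin N, (π (SA i)).toReal := by
      have hfeq : (fun w : Fin N → ℝ => ((Finset.univ.filter fun i : Fin N =>
          w i < orderStat w (c + 1)).card : ℝ))
          = fun w => ∑ i : Fin N, Set.indicator (SA i) (fun _ => (1 : ℝ)) w := by
        funext w
        rw [Finset.card_filter]
        push_cast
        apply Finset.sum_congr rfl
        intro i _
        rw [Set.indicator_apply]
        simp only [hSA, Set.mem_setOf_eq]
      rw [hfeq, integral_finset_sum]
      · apply Finset.sum_congr rfl
        intro i _
        exact integral_indicator_one (hSAmeas i)
      · intro i _
        exact (integrable_const (1 : ℝ)).indicator (hSAmeas i)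
    have hNq : (N : ℝ) * q = (c : ℝ) := by
      rw [← hint_all, hint_all2]
      rw [Finset.sum_congr rfl (fun i _ => by rw [hSAtrans i])]
      rw [Finset.sum_const, Finset.card_univ, Fintype.card_fin, nsmul_eq_mul, hq]
    have htarget : ∫ w, ((Finset.univ.filter fun i : Fin N =>
        (i : ℕ) < m ∧ w i < orderStat w (c + 1)).card : ℝ) ∂π = (m : ℝ) * q := by
      have hfeq : (fun w : Fin N → ℝ => ((Finset.univ.filter fun i : Fin N =>
          (i : ℕ) < m ∧ w i < orderStat w (c + 1)).card : ℝ))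
          = fun w => ∑ i : Fin N, Set.indicator (Bset i) (fun _ => (1 : ℝ)) w := by
        funext w
        rw [Finset.card_filter]
        push_cast
        apply Finset.sum_congr rfl
        intro i _
        rw [Set.indicator_apply]
        simp only [hBset, hSA, Set.mem_setOf_eq]
      rw [hfeq, integral_finset_sum]
      · have hterm : ∀ i : Fin N, ∫ w, Set.indicator (Bset i) (fun _ => (1 : ℝ)) w ∂π
            = if (i : ℕ) < m then q else 0 := by
          intro i
          have h1 : ∫ w, Set.indicator (Bset i) (fun _ => (1 : ℝ)) w ∂π
              = (π (Bset i)).toReal := integral_indicator_one (hBmeas i)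
          rw [h1]
          by_cases h : (i : ℕ) < m
          · have heq : Bset i = SA i := by
              ext v; simp [hBset, h]
            rw [heq, hSAtrans i, if_pos h, hq]
          · have heq : Bset i = ∅ := by
              ext v; simp [hBset, h]
            rw [heq, if_neg h]
            simp
        rw [Finset.sum_congr rfl (fun i _ => hterm i)]
        rw [← Finset.sum_filter]
        rw [Finset.sum_const, Stmt7Aux.card_A hmN, nsmul_eq_mul]
      · intro i _
        exact (integrable_const (1 : ℝ)).indicator (hBmeas i)
    rw [htarget]
    have hmn : (m : ℝ) + (n : ℝ) = (N : ℝ) := by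
      rw [hN]; push_cast; ring
    have hNne : (N : ℝ) ≠ 0 := by
      have h0 : (0 : ℝ) < N := by exact_mod_cast hNpos
      linarith
    have hNval : (N : ℝ) = 2 * (c : ℝ) + 1 := by exact_mod_cast hc
    have hqval : q = (c : ℝ) / N := by
      rw [eq_div_iff hNne]
      linarith [hNq]
    rw [hqval, hmn, hNval]
    have hden : 2 * (c : ℝ) + 1 ≠ 0 := by positivity
    field_simp
    ring
end
end

section
/- Let X, Y, Y' be independent, X with density f and distribution function F, and Y, Y' with density f(·−θ); let k be a kernel symmetric about the origin with ∫ k = 1, ∫ t^2|k(t)|dt < ∞, and K(t) = ∫_{-∞}^t k(u)du. If f is continuously differentiable with bounded derivative, then as h → 0, E[ K((X−Y)/h) K((X−Y')/h) ] = ∫_{-∞}^∞ f(x) F(x−θ)^2 dx + O(h^2). -/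
open MeasureTheory ProbabilityTheory Filter Asymptotics Set
open scoped Topology ENNReal NNReal BigOperators

noncomputable section

lemma Kfun_eq (k : ℝ → ℝ) (hk : Integrable k) (t : ℝ) :
    Kfun k t = Kfun k 0 + ∫ s in (0:ℝ)..t, k s := by
  have h := intervalIntegral.integral_Iic_sub_Iic (μ := volume) (f := k) (a := (0:ℝ)) (b := t)
    hk.integrableOn hk.integrableOn
  unfold Kfun; linarith

lemma Kfun_continuous (k : ℝ → ℝ) (hk : Integrable k) : Continuous (Kfun k) := by
  have : Continuous fun t => Kfun k 0 + ∫ s in (0:ℝ)..t, k s :=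
    continuous_const.add (hk.continuous_primitive 0)
  exact this.congr fun t => (Kfun_eq k hk t).symm

lemma Kfun_bound (k : ℝ → ℝ) (hk : Integrable k) (t : ℝ) :
    |Kfun k t| ≤ ∫ s, |k s| := by
  calc |Kfun k t| ≤ ∫ s in Set.Iic t, |k s| := by
        simpa [Real.norm_eq_abs, Kfun] using
          norm_integral_le_integral_norm (μ := volume.restrict (Set.Iic t)) k
    _ ≤ ∫ s, |k s| := setIntegral_le_integral hk.abs (Eventually.of_forall fun s => abs_nonneg _)

lemma taylor_bound (f : ℝ → ℝ) (hfI : Integrable f)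
    (F : ℝ → ℝ) (hF : ∀ x, F x = ∫ t in Set.Iic x, f t)
    (C : ℝ) (hC : 0 ≤ C)
    (hlip : ∀ x y, |f x - f y| ≤ C * |x - y|) (t a : ℝ) :
    |F (t - a) - F t + a * f t| ≤ C * a ^ 2 := by
  have h1 : F t - F (t - a) = ∫ u in (t-a)..t, f u := by
    rw [hF, hF]
    exact (intervalIntegral.integral_Iic_sub_Iic (f := f) (μ := volume) (a := t - a) (b := t)
      hfI.integrableOn hfI.integrableOn)
  have h2 : a * f t = ∫ _u in (t-a)..t, f t := by
    rw [intervalIntegral.integral_const, smul_eq_mul]; ring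
  have h3 : F (t - a) - F t + a * f t = ∫ u in (t-a)..t, (f t - f u) := by
    rw [intervalIntegral.integral_sub (intervalIntegrable_const) hfI.intervalIntegrable]
    rw [← h2]; linarith [h1]
  rw [h3]
  have hb : ∀ u ∈ Set.uIoc (t-a) t, ‖f t - f u‖ ≤ C * |a| := by
    intro u hu
    rcases Set.mem_uIoc.1 hu with h | h
    · have : |t - u| ≤ |a| := by
        rw [abs_of_nonneg (by linarith [h.2])]
        calc t - u ≤ t - (t - a) := by linarith [h.1]
          _ = a := by ring
          _ ≤ |a| := le_abs_self a
      calc ‖f t - f u‖ = |f t - f u| := rfl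
        _ ≤ C * |t - u| := hlip t u
        _ ≤ C * |a| := mul_le_mul_of_nonneg_left this hC
    · have : |t - u| ≤ |a| := by
        rw [abs_of_nonpos (by linarith [h.1])]
        calc -(t - u) = u - t := by ring
          _ ≤ (t - a) - t := by linarith [h.2]
          _ = -a := by ring
          _ ≤ |a| := neg_le_abs a
      calc ‖f t - f u‖ = |f t - f u| := rfl
        _ ≤ C * |t - u| := hlip t u
        _ ≤ C * |a| := mul_le_mul_of_nonneg_left this hC
  have := intervalIntegral.norm_integral_le_of_norm_le_const hb
  calc |∫ u in (t-a)..t, (f t - f u)| ≤ C * |a| * |t - (t - a)| := this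
    _ = C * a ^ 2 := by
      rw [show t - (t-a) = a by ring, mul_assoc, abs_mul_abs_self, ← sq]

lemma fubini_step (f : ℝ → ℝ) (hfI : Integrable f)
    (F : ℝ → ℝ) (hF : ∀ x, F x = ∫ t in Set.Iic x, f t)
    (k : ℝ → ℝ) (hkInt : Integrable k) (h : ℝ) (hh : 0 < h) (t : ℝ) :
    ∫ u, Kfun k ((t - u) / h) * f u = ∫ s, k s * F (t - h * s) := by
  have hS : MeasurableSet {p : ℝ × ℝ | p.2 ≤ (t - p.1) / h} :=
    measurableSet_le measurable_snd ((continuous_const.sub continuous_fst).div_const h).measurable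
  have hint : Integrable (fun p : ℝ × ℝ => f p.1 * k p.2) (volume.prod volume) :=
    hfI.mul_prod hkInt
  have hgint : Integrable
      (fun p : ℝ × ℝ => f p.1 * (Set.Iic ((t - p.1) / h)).indicator k p.2)
      (volume.prod volume) := by
    have : (fun p : ℝ × ℝ => f p.1 * (Set.Iic ((t - p.1) / h)).indicator k p.2)
        = {p : ℝ × ℝ | p.2 ≤ (t - p.1) / h}.indicator (fun p => f p.1 * k p.2) := by
      funext p
      by_cases hp : p.2 ≤ (t - p.1) / h
      · simp [Set.indicator_apply, hp]
      · simp [Set.indicator_apply, hp]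
    rw [this]
    exact hint.indicator hS
  calc ∫ u, Kfun k ((t - u) / h) * f u
      = ∫ u, ∫ s, f u * (Set.Iic ((t - u) / h)).indicator k s := by
        congr 1; funext u
        rw [integral_const_mul]
        unfold Kfun
        rw [← integral_indicator measurableSet_Iic, mul_comm]
    _ = ∫ s, ∫ u, f u * (Set.Iic ((t - u) / h)).indicator k s := integral_integral_swap hgint
    _ = ∫ s, k s * F (t - h * s) := by
        congr 1; funext s
        have hiff : ∀ u : ℝ, s ≤ (t - u) / h ↔ u ≤ t - h * s := by
          intro u
          rw [le_div_iff₀ hh]; constructor <;> intro hle <;> nlinarith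
        have key : ∀ u, f u * (Set.Iic ((t - u) / h)).indicator k s
            = (Set.Iic (t - h * s)).indicator (fun u => f u * k s) u := by
          intro u
          by_cases hu : u ≤ t - h * s
          · simp [Set.indicator_apply, hu, (hiff u).2 hu]
          · have : ¬ s ≤ (t - u) / h := fun hc => hu ((hiff u).1 hc)
            simp [Set.indicator_apply, hu, this]
        calc (∫ u, f u * (Set.Iic ((t - u) / h)).indicator k s)
            = ∫ u, (Set.Iic (t - h * s)).indicator (fun u => f u * k s) u := by
              congr 1; funext u; exact key u
          _ = ∫ u in Set.Iic (t - h * s), f u * k s := integral_indicator measurableSet_Iic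
          _ = (∫ u in Set.Iic (t - h * s), f u) * k s := by rw [integral_mul_const]
          _ = k s * F (t - h * s) := by rw [hF, mul_comm]

lemma odd_int_zero (k : ℝ → ℝ) (hksym : ∀ t, k (-t) = k t) :
    ∫ s, s * k s = 0 := by
  have h := integral_neg_eq_self (fun s => s * k s) (volume : Measure ℝ)
  simp only [hksym, neg_mul] at h
  have : ∫ s, -(s * k s) = - ∫ s, s * k s := integral_neg _
  rw [this] at h
  linarith

lemma conv_bound (f : ℝ → ℝ) (F : ℝ → ℝ) (hFc : Continuous F) (hFb : ∀ x, |F x| ≤ 1)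
    (C : ℝ)
    (htay : ∀ t a, |F (t - a) - F t + a * f t| ≤ C * a ^ 2)
    (k : ℝ → ℝ) (hksym : ∀ t, k (-t) = k t) (hkInt : Integrable k) (hk1 : ∫ t, k t = 1)
    (hk2 : Integrable fun t => t ^ 2 * |k t|) (h : ℝ) (t : ℝ) :
    |(∫ s, k s * F (t - h * s)) - F t| ≤ (C * ∫ s, s ^ 2 * |k s|) * h ^ 2 := by
  have i1 : Integrable (fun s => k s * F (t - h * s)) := by
    refine (hkInt.abs.mono' ?_ ?_)
    · exact hkInt.aestronglyMeasurable.mul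
        ((hFc.comp (continuous_const.sub (continuous_const.mul continuous_id))).aestronglyMeasurable)
    · filter_upwards with s
      rw [Real.norm_eq_abs, abs_mul]
      calc |k s| * |F (t - h * s)| ≤ |k s| * 1 :=
            mul_le_mul_of_nonneg_left (hFb _) (abs_nonneg _)
        _ = |k s| := mul_one _
  have isk : Integrable (fun s => s * k s) := by
    refine (hkInt.abs.add hk2).mono' ?_ ?_
    · exact (measurable_id.aestronglyMeasurable).mul hkInt.aestronglyMeasurable
    · filter_upwards with s
      rw [Real.norm_eq_abs, abs_mul]
      have h1 : |s| ≤ 1 + s ^ 2 := by nlinarith [abs_nonneg s, sq_abs s, sq_nonneg (|s| - 1)]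
      calc |s| * |k s| ≤ (1 + s ^ 2) * |k s| := mul_le_mul_of_nonneg_right h1 (abs_nonneg _)
        _ = |k s| + s ^ 2 * |k s| := by ring
  have i3 : Integrable (fun s => k s * ((h * s) * f t)) := by
    have : (fun s => k s * ((h * s) * f t)) = fun s => (h * f t) * (s * k s) := by
      funext s; ring
    rw [this]
    exact isk.const_mul _
  have i2 : Integrable (fun s => k s * F t) := hkInt.mul_const _
  have e1 : (∫ s, k s * F (t - h * s)) - F t
      = ∫ s, k s * (F (t - h * s) - F t + (h * s) * f t) := by
    have esplit : ∫ s, k s * (F (t - h * s) - F t + (h * s) * f t)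
        = ((∫ s, k s * F (t - h * s)) - ∫ s, k s * F t) + ∫ s, k s * ((h * s) * f t) := by
      rw [show (fun s => k s * (F (t - h * s) - F t + (h * s) * f t))
          = fun s => (k s * F (t - h * s) - k s * F t) + k s * ((h * s) * f t) from
          funext fun s => by ring]
      rw [integral_add (f := fun s => k s * F (t - h * s) - k s * F t)
          (g := fun s => k s * ((h * s) * f t)) (i1.sub i2) i3, integral_sub i1 i2]
    have ekF : ∫ s, k s * F t = F t := by
      rw [integral_mul_const, hk1, one_mul]
    have ehs : ∫ s, k s * ((h * s) * f t) = 0 := by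
      have : (fun s => k s * ((h * s) * f t)) = fun s => (h * f t) * (s * k s) := by
        funext s; ring
      rw [this, integral_const_mul, odd_int_zero k hksym, mul_zero]
    rw [esplit, ekF, ehs, add_zero]
  rw [e1]
  have hbd : ∀ s : ℝ, ‖k s * (F (t - h * s) - F t + (h * s) * f t)‖
      ≤ (C * h ^ 2) * (s ^ 2 * |k s|) := by
    intro s
    rw [Real.norm_eq_abs, abs_mul]
    calc |k s| * |F (t - h * s) - F t + (h * s) * f t|
        ≤ |k s| * (C * (h * s) ^ 2) := mul_le_mul_of_nonneg_left (htay t (h * s)) (abs_nonneg _)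
      _ = (C * h ^ 2) * (s ^ 2 * |k s|) := by ring
  calc |∫ s, k s * (F (t - h * s) - F t + (h * s) * f t)|
      ≤ ∫ s, (C * h ^ 2) * (s ^ 2 * |k s|) :=
        norm_integral_le_of_norm_le (hk2.const_mul _) (Eventually.of_forall hbd)
    _ = (C * ∫ s, s ^ 2 * |k s|) * h ^ 2 := by rw [integral_const_mul]; ring

/-- For independent `X` (density `f`) and `Y, Y'` (density `f(· - θ)`),
as `h → 0⁺`, `E[K((X-Y)/h) K((X-Y')/h)] = ∫ f(x) F(x-θ)² dx + O(h²)`. -/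
theorem stmt_12
    (f : ℝ → ℝ) (hf0 : ∀ x, 0 ≤ f x) (hfi : ∫ x, f x = 1)
    (F : ℝ → ℝ) (hF : ∀ x, F x = ∫ t in Set.Iic x, f t)
    (hfC : ContDiff ℝ 1 f) (hfd : ∃ C, ∀ x, |deriv f x| ≤ C)
    (k : ℝ → ℝ) (hksym : ∀ t, k (-t) = k t) (hkInt : Integrable k) (hk1 : ∫ t, k t = 1)
    (hk2 : Integrable fun t => t ^ 2 * |k t|) (θ : ℝ) :
    (fun h : ℝ => (∫ p : ℝ × ℝ × ℝ,
          Kfun k ((p.1 - p.2.1) / h) * Kfun k ((p.1 - p.2.2) / h)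
          ∂((densMeasure f).prod
            (((densMeasure f).map (· + θ)).prod ((densMeasure f).map (· + θ)))))
        - ∫ x, f x * F (x - θ) ^ 2) =O[𝓝[>] (0:ℝ)] fun h : ℝ => h ^ 2 := by
  obtain ⟨C0, hC0⟩ := hfd
  have hC : 0 ≤ C0 := le_trans (abs_nonneg _) (hC0 0)
  have hfcont : Continuous f := hfC.continuous
  have hfI : Integrable f := by
    by_contra hni
    rw [integral_undef hni] at hfi; norm_num at hfi
  -- Lipschitz
  have hlipW : LipschitzWith C0.toNNReal f := by
    apply lipschitzWith_of_nnnorm_deriv_le (hfC.differentiable one_ne_zero)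
    intro x
    rw [← NNReal.coe_le_coe, coe_nnnorm, Real.norm_eq_abs, Real.coe_toNNReal _ hC]
    exact hC0 x
  have hlip : ∀ x y, |f x - f y| ≤ C0 * |x - y| := by
    intro x y
    have := hlipW.dist_le_mul x y
    rwa [Real.dist_eq, Real.dist_eq, Real.coe_toNNReal _ hC] at this
  -- F facts
  have hFc : Continuous F := by
    have : F = Kfun f := funext fun x => by rw [hF]; rfl
    rw [this]; exact Kfun_continuous f hfI
  have hFb : ∀ x, |F x| ≤ 1 := by
    intro x
    rw [hF, abs_of_nonneg (setIntegral_nonneg measurableSet_Iic fun t _ => hf0 t)]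
    rw [← hfi]
    exact setIntegral_le_integral hfI (Eventually.of_forall hf0)
  have htay := taylor_bound f hfI F hF C0 hC hlip
  -- constants
  set M := ∫ s, |k s| with hMdef
  have hM1 : 1 ≤ M := by
    rw [← hk1]
    calc ∫ t, k t ≤ |∫ t, k t| := le_abs_self _
      _ ≤ ∫ s, |k s| := by
        simpa [Real.norm_eq_abs] using norm_integral_le_integral_norm (μ := volume) k
  have hM0 : (0:ℝ) ≤ M := le_trans zero_le_one hM1
  set I2 := ∫ s, s ^ 2 * |k s| with hI2def
  have hI20 : 0 ≤ I2 := integral_nonneg fun s => mul_nonneg (sq_nonneg _) (abs_nonneg _)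
  set C2 := C0 * I2 with hC2def
  have hC20 : 0 ≤ C2 := mul_nonneg hC hI20
  -- measures
  set μ := densMeasure f with hμdef
  have hμuniv : μ Set.univ = 1 := by
    rw [hμdef]
    unfold densMeasure
    rw [withDensity_apply _ MeasurableSet.univ, Measure.restrict_univ,
      ← ofReal_integral_eq_lintegral_ofReal hfI (Eventually.of_forall hf0), hfi,
      ENNReal.ofReal_one]
  haveI hPμ : IsProbabilityMeasure μ := ⟨hμuniv⟩
  set ν := μ.map (· + θ) with hνdef
  haveI hPν : IsProbabilityMeasure ν :=
    Measure.isProbabilityMeasure_map (measurable_id.add_const θ).aemeasurable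
  -- integral against μ
  have hμint : ∀ g : ℝ → ℝ, (∫ u, g u ∂μ) = ∫ u, f u * g u := by
    intro g
    rw [hμdef]
    unfold densMeasure
    simp only [ENNReal.ofReal]
    rw [integral_withDensity_eq_integral_smul₀ (f := fun x => (f x).toNNReal)
      ((measurable_real_toNNReal.comp hfcont.measurable).aemeasurable) g]
    congr 1; funext u
    rw [NNReal.smul_def, Real.coe_toNNReal _ (hf0 u), smul_eq_mul]
  -- main bound for fixed h > 0
  have key : ∀ h : ℝ, 0 < h →
      |(∫ p : ℝ × ℝ × ℝ, Kfun k ((p.1 - p.2.1) / h) * Kfun k ((p.1 - p.2.2) / h)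
          ∂(μ.prod (ν.prod ν)))
        - ∫ x, f x * F (x - θ) ^ 2| ≤ ((M + 1) * C2) * h ^ 2 := by
    intro h hh
    set φ : ℝ → ℝ → ℝ := fun x y => Kfun k ((x - y) / h) with hφdef
    have hφc : Continuous fun p : ℝ × ℝ => φ p.1 p.2 :=
      (Kfun_continuous k hkInt).comp ((continuous_fst.sub continuous_snd).div_const h)
    have hφb : ∀ x y, |φ x y| ≤ M := fun x y => Kfun_bound k hkInt _
    -- integrability over the triple product
    have hprodInt : Integrable (fun p : ℝ × ℝ × ℝ => φ p.1 p.2.1 * φ p.1 p.2.2)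
        (μ.prod (ν.prod ν)) := by
      refine (integrable_const (M * M)).mono' ?_ ?_
      · exact ((hφc.comp (continuous_fst.prodMk (continuous_snd.fst))).mul
          (hφc.comp (continuous_fst.prodMk (continuous_snd.snd)))).aestronglyMeasurable
      · filter_upwards with p
        rw [Real.norm_eq_abs, abs_mul]
        exact mul_le_mul (hφb _ _) (hφb _ _) (abs_nonneg _) hM0
    set G : ℝ → ℝ := fun x => ∫ y, φ x y ∂ν with hGdef
    have hGm : StronglyMeasurable G :=
      (hφc.stronglyMeasurable).integral_prod_right'
    have hGb : ∀ x, |G x| ≤ M := by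
      intro x
      calc |G x| ≤ ∫ y, M ∂ν :=
            norm_integral_le_of_norm_le (integrable_const M)
              (Eventually.of_forall fun y => by
                rw [Real.norm_eq_abs]; exact hφb x y)
        _ = M := by simp
    -- Step A : product integral equals ∫ f * G^2
    have hA : (∫ p : ℝ × ℝ × ℝ, φ p.1 p.2.1 * φ p.1 p.2.2 ∂(μ.prod (ν.prod ν)))
        = ∫ x, f x * G x ^ 2 := by
      rw [integral_prod _ hprodInt]
      rw [show (fun x => ∫ q : ℝ × ℝ, φ x q.1 * φ x q.2 ∂(ν.prod ν)) = fun x => G x ^ 2 by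
        funext x
        rw [integral_prod_mul (fun y => φ x y) (fun y => φ x y), hGdef, sq]]
      exact hμint _
    -- comparison of G with F(x - θ)
    have hGF : ∀ x, |G x - F (x - θ)| ≤ C2 * h ^ 2 := by
      intro x
      have e2 : (∫ y, φ x y ∂ν) = ∫ u, Kfun k (((x - θ) - u) / h) * f u := by
        rw [hνdef]
        have hcont : Continuous fun y => φ x y := by
          simp only [hφdef]
          exact (Kfun_continuous k hkInt).comp
            ((continuous_const.sub continuous_id).div_const h)
        rw [integral_map (measurable_add_const θ).aemeasurable
          (hcont.aestronglyMeasurable (μ := μ.map (fun x => x + θ)))]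
        rw [hμint fun u => φ x (u + θ)]
        congr 1; funext u
        rw [mul_comm]
        simp only [hφdef]
        rw [show x - (u + θ) = x - θ - u from by ring]
      have e3 : G x = ∫ s, k s * F ((x - θ) - h * s) := by
        rw [show G x = ∫ y, φ x y ∂ν from rfl, e2,
          fubini_step f hfI F hF k hkInt h hh (x - θ)]
      rw [e3]
      exact conv_bound f F hFc hFb C0 htay k hksym hkInt hk1 hk2 h (x - θ)
    -- integrability of the two integrands
    have i4 : Integrable (fun x => f x * G x ^ 2) := by
      refine (hfI.const_mul (M ^ 2)).mono' ?_ ?_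
      · exact hfcont.aestronglyMeasurable.mul (hGm.pow 2).aestronglyMeasurable
      · filter_upwards with x
        rw [Real.norm_eq_abs, abs_mul, abs_of_nonneg (hf0 x)]
        have : |G x ^ 2| ≤ M ^ 2 := by
          rw [abs_pow, ← sq_abs M]
          exact pow_le_pow_left₀ (abs_nonneg _) (le_trans (hGb x) (le_abs_self M)) 2
        calc f x * |G x ^ 2| ≤ f x * M ^ 2 := mul_le_mul_of_nonneg_left this (hf0 x)
          _ = M ^ 2 * f x := by ring
    have i5 : Integrable (fun x => f x * F (x - θ) ^ 2) := by
      refine hfI.mono' ?_ ?_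
      · exact hfcont.aestronglyMeasurable.mul
          (((hFc.comp (continuous_id.sub continuous_const)).pow 2).aestronglyMeasurable)
      · filter_upwards with x
        rw [Real.norm_eq_abs, abs_mul, abs_of_nonneg (hf0 x)]
        have : |F (x - θ) ^ 2| ≤ 1 := by
          rw [abs_pow]
          calc |F (x - θ)| ^ 2 ≤ 1 ^ 2 := pow_le_pow_left₀ (abs_nonneg _) (hFb _) 2
            _ = 1 := one_pow 2
        calc f x * |F (x - θ) ^ 2| ≤ f x * 1 := mul_le_mul_of_nonneg_left this (hf0 x)
          _ = f x := mul_one _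
    -- assemble
    have hdiff : (∫ p : ℝ × ℝ × ℝ, Kfun k ((p.1 - p.2.1) / h) * Kfun k ((p.1 - p.2.2) / h)
          ∂(μ.prod (ν.prod ν))) - ∫ x, f x * F (x - θ) ^ 2
        = ∫ x, f x * (G x ^ 2 - F (x - θ) ^ 2) := by
      have : (∫ p : ℝ × ℝ × ℝ, Kfun k ((p.1 - p.2.1) / h) * Kfun k ((p.1 - p.2.2) / h)
          ∂(μ.prod (ν.prod ν)))
          = ∫ x, f x * G x ^ 2 := hA
      rw [this, ← integral_sub i4 i5]
      congr 1; funext x; ring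
    rw [hdiff]
    have hbd : ∀ x : ℝ, ‖f x * (G x ^ 2 - F (x - θ) ^ 2)‖ ≤ ((M + 1) * C2 * h ^ 2) * f x := by
      intro x
      rw [Real.norm_eq_abs, abs_mul, abs_of_nonneg (hf0 x)]
      have hfac : G x ^ 2 - F (x - θ) ^ 2 = (G x - F (x - θ)) * (G x + F (x - θ)) := by ring
      have h2 : |G x + F (x - θ)| ≤ M + 1 :=
        le_trans (abs_add_le _ _) (add_le_add (hGb x) (hFb _))
      have h3 : |G x ^ 2 - F (x - θ) ^ 2| ≤ (C2 * h ^ 2) * (M + 1) := by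
        rw [hfac, abs_mul]
        exact mul_le_mul (hGF x) h2 (abs_nonneg _) (by positivity)
      calc f x * |G x ^ 2 - F (x - θ) ^ 2| ≤ f x * ((C2 * h ^ 2) * (M + 1)) :=
            mul_le_mul_of_nonneg_left h3 (hf0 x)
        _ = ((M + 1) * C2 * h ^ 2) * f x := by ring
    calc |∫ x, f x * (G x ^ 2 - F (x - θ) ^ 2)|
        ≤ ∫ x, ((M + 1) * C2 * h ^ 2) * f x :=
          norm_integral_le_of_norm_le (hfI.const_mul _) (Eventually.of_forall hbd)
      _ = ((M + 1) * C2) * h ^ 2 := by rw [integral_const_mul, hfi]; ring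
  -- conclude Big-O
  rw [isBigO_iff]
  refine ⟨(M + 1) * C2, ?_⟩
  filter_upwards [self_mem_nhdsWithin] with h hh
  have := key h hh
  rw [Real.norm_eq_abs, Real.norm_eq_abs, abs_of_nonneg (sq_nonneg h)]
  exact this
end
end

section
/- Let F be a distribution function with density f that is continuous and positive at the median z_0 of F (F(z_0) = 1/2). Let λ_N → λ with 0 < λ < 1, fix ξ > 0, and set θ_N = ξ/√N. Let z_{θ_N,N} denote the median of the mixture distribution G_{θ_N,N}(x) = λ_N F(x) + (1−λ_N) F(x−θ_N). Then √N ( z_{θ_N,N} − z_0 ) → (1−λ) ξ as N → ∞; that is, z_{θ_N,N} = z_0 + N^{-1/2}(1−λ)ξ + o(N^{-1/2}). -/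
open MeasureTheory ProbabilityTheory Filter Asymptotics Set
open scoped Topology ENNReal NNReal BigOperators

noncomputable section

/-- Let `z₀` be the median of `F` (density `f` continuous and positive at
`z₀`), `λ_N → λ ∈ (0,1)`, `ξ > 0`, `θ_N = ξ/√N`, and let `z_{θ_N,N}` be the median of the
mixture `G_{θ_N,N}(x) = λ_N F(x) + (1-λ_N) F(x-θ_N)`. Then
`√N (z_{θ_N,N} - z₀) → (1-λ) ξ`. -/
theorem stmt_18
    (f : ℝ → ℝ) (hf0 : ∀ x, 0 ≤ f x) (hfm : Measurable f) (hfint : Integrable f)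
    (hfi : ∫ x, f x = 1)
    (F : ℝ → ℝ) (hF : ∀ x, F x = ∫ t in Set.Iic x, f t)
    (z₀ : ℝ) (hmed : F z₀ = 1 / 2) (hfc : ContinuousAt f z₀) (hfpos : 0 < f z₀)
    (lam : ℕ → ℝ) (l : ℝ) (hl0 : 0 < l) (hl1 : l < 1)
    (hlam : Tendsto lam atTop (𝓝 l))
    (ξ : ℝ) (hξ : 0 < ξ) :
    Tendsto (fun N : ℕ => Real.sqrt N *
        (sInf {x : ℝ | 1 / 2 ≤ lam N * F x + (1 - lam N) * F (x - ξ / Real.sqrt N)} - z₀))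
      atTop (𝓝 ((1 - l) * ξ)) := by
  
  have hFmono : Monotone F := by
    intro x y hxy
    simp only [hF]
    exact setIntegral_mono_set hfint.integrableOn (Filter.Eventually.of_forall hf0)
      (HasSubset.Subset.eventuallyLE (Set.Iic_subset_Iic.2 hxy))
  have hFd : HasDerivAt F (f z₀) z₀ := by
    have h2 : HasDerivAt (fun u => F z₀ + ∫ t in z₀..u, f t) (f z₀) z₀ :=
      (intervalIntegral.integral_hasDerivAt_right hfint.intervalIntegrable
        hfm.stronglyMeasurable.stronglyMeasurableAtFilter hfc).const_add _
    apply h2.congr_of_eventuallyEq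
    filter_upwards with u
    rw [hF u, hF z₀, ← intervalIntegral.integral_Iic_sub_Iic hfint.integrableOn
      hfint.integrableOn]
    ring
  have hsq : Tendsto (fun N : ℕ => Real.sqrt N) atTop atTop := by
    apply tendsto_atTop_atTop_of_monotone
    · intro x y hxy
      exact Real.sqrt_le_sqrt (Nat.cast_le.2 hxy)
    · intro b
      refine ⟨⌈b ^ 2⌉₊, ?_⟩
      rcases le_or_gt b 0 with hb | hb
      · exact hb.trans (Real.sqrt_nonneg _)
      · calc b = Real.sqrt (b ^ 2) := (Real.sqrt_sq hb.le).symm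
          _ ≤ Real.sqrt (⌈b ^ 2⌉₊ : ℝ) := Real.sqrt_le_sqrt (Nat.le_ceil _)
  have hsqpos : ∀ᶠ N : ℕ in atTop, 0 < Real.sqrt N := hsq.eventually_gt_atTop 0
  have hslope : ∀ c : ℝ, Tendsto (fun N : ℕ => Real.sqrt N * (F (z₀ + c / Real.sqrt N) - F z₀))
      atTop (𝓝 (f z₀ * c)) := by
    intro c
    rcases eq_or_ne c 0 with rfl | hc
    · simpa using tendsto_const_nhds (x := (0:ℝ)) (f := atTop (α := ℕ))
    · have hdiv : Tendsto (fun N : ℕ => c / Real.sqrt N) atTop (𝓝 0) :=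
        tendsto_const_nhds.div_atTop hsq
      have hto : Tendsto (fun N : ℕ => z₀ + c / Real.sqrt N) atTop (𝓝[≠] z₀) := by
        rw [tendsto_nhdsWithin_iff]
        refine ⟨by simpa using (tendsto_const_nhds (x := z₀)).add hdiv, ?_⟩
        filter_upwards [hsqpos] with N hN
        simp only [Set.mem_compl_iff, Set.mem_singleton_iff]
        intro h
        have h0 : c / Real.sqrt N = 0 := by linarith
        rw [div_eq_zero_iff] at h0
        rcases h0 with h0 | h0
        · exact hc h0
        · exact absurd h0 (ne_of_gt hN)
      have h1 : Tendsto (fun N : ℕ => c * slope F z₀ (z₀ + c / Real.sqrt N)) atTop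
          (𝓝 (c * f z₀)) :=
        tendsto_const_nhds.mul ((hasDerivAt_iff_tendsto_slope.mp hFd).comp hto)
      rw [show f z₀ * c = c * f z₀ by ring]
      apply h1.congr'
      filter_upwards [hsqpos] with N hN
      have hs : Real.sqrt N ≠ 0 := ne_of_gt hN
      rw [slope_def_field, add_sub_cancel_left]
      set X := F (z₀ + c / Real.sqrt N) - F z₀ with hX
      field_simp
  have key : ∀ c : ℝ, Tendsto (fun N : ℕ => Real.sqrt N *
      ((lam N * F (z₀ + c / Real.sqrt N) +
        (1 - lam N) * F (z₀ + c / Real.sqrt N - ξ / Real.sqrt N)) - 1 / 2))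
      atTop (𝓝 (f z₀ * (c - (1 - l) * ξ))) := by
    intro c
    have h1 := (hlam.mul (hslope c)).add
      (((tendsto_const_nhds (x := (1:ℝ))).sub hlam).mul (hslope (c - ξ)))
    have heq : ∀ N : ℕ, lam N * (Real.sqrt N * (F (z₀ + c / Real.sqrt N) - F z₀)) +
        (1 - lam N) * (Real.sqrt N * (F (z₀ + (c - ξ) / Real.sqrt N) - F z₀)) =
        Real.sqrt N * ((lam N * F (z₀ + c / Real.sqrt N) +
          (1 - lam N) * F (z₀ + c / Real.sqrt N - ξ / Real.sqrt N)) - 1 / 2) := by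
      intro N
      rw [show z₀ + c / Real.sqrt N - ξ / Real.sqrt N = z₀ + (c - ξ) / Real.sqrt N by ring,
        hmed]
      ring
    have h2 := h1.congr heq
    convert h2 using 2
    ring
  rw [Metric.tendsto_atTop]
  intro ε hε
  set cp : ℝ := (1 - l) * ξ + ε / 2 with hcp
  set cm : ℝ := (1 - l) * ξ - ε / 2 with hcm
  have hpos : ∀ᶠ N : ℕ in atTop, 0 < Real.sqrt N *
      ((lam N * F (z₀ + cp / Real.sqrt N) +
        (1 - lam N) * F (z₀ + cp / Real.sqrt N - ξ / Real.sqrt N)) - 1 / 2) :=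
    (key cp).eventually (eventually_gt_nhds (by
      rw [show cp - (1 - l) * ξ = ε / 2 by rw [hcp]; ring]; positivity))
  have hneg : ∀ᶠ N : ℕ in atTop, Real.sqrt N *
      ((lam N * F (z₀ + cm / Real.sqrt N) +
        (1 - lam N) * F (z₀ + cm / Real.sqrt N - ξ / Real.sqrt N)) - 1 / 2) < 0 :=
    (key cm).eventually (eventually_lt_nhds (by
      rw [show cm - (1 - l) * ξ = -(ε / 2) by rw [hcm]; ring]
      have : 0 < f z₀ * (ε / 2) := by positivity
      linarith))
  have hlam0 : ∀ᶠ N : ℕ in atTop, 0 < lam N := hlam.eventually (eventually_gt_nhds hl0)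
  have hlam1 : ∀ᶠ N : ℕ in atTop, lam N < 1 := hlam.eventually (eventually_lt_nhds hl1)
  have H : ∀ᶠ N : ℕ in atTop, dist (Real.sqrt N *
      (sInf {x : ℝ | 1 / 2 ≤ lam N * F x + (1 - lam N) * F (x - ξ / Real.sqrt N)} - z₀))
      ((1 - l) * ξ) < ε := by
    filter_upwards [hpos, hneg, hlam0, hlam1, hsqpos] with N hp hm hL0 hL1 hsN
    set s : ℝ := Real.sqrt N with hs
    have hs0 : s ≠ 0 := ne_of_gt hsN
    set S : Set ℝ := {x : ℝ | 1 / 2 ≤ lam N * F x + (1 - lam N) * F (x - ξ / s)} with hS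
    set a : ℝ := z₀ + cp / s with ha
    set b : ℝ := z₀ + cm / s with hb
    have hGmono : ∀ x y : ℝ, x ≤ y →
        lam N * F x + (1 - lam N) * F (x - ξ / s) ≤
        lam N * F y + (1 - lam N) * F (y - ξ / s) := by
      intro x y hxy
      have e1 := hFmono hxy
      have e2 := hFmono (sub_le_sub_right hxy (ξ / s))
      nlinarith [mul_le_mul_of_nonneg_left e1 hL0.le,
        mul_le_mul_of_nonneg_left e2 (by linarith : (0:ℝ) ≤ 1 - lam N)]
    have hGa : 1 / 2 < lam N * F a + (1 - lam N) * F (a - ξ / s) := by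
      nlinarith [mul_pos hsN (show (0:ℝ) <
        (lam N * F a + (1 - lam N) * F (a - ξ / s)) - 1 / 2 from by nlinarith)]
    have hGb : lam N * F b + (1 - lam N) * F (b - ξ / s) < 1 / 2 := by
      nlinarith
    have haS : a ∈ S := le_of_lt hGa
    have hbl : ∀ x ∈ S, b ≤ x := by
      intro x hx
      by_contra hbx
      push_neg at hbx
      have := hGmono x b hbx.le
      have hx' : 1 / 2 ≤ lam N * F x + (1 - lam N) * F (x - ξ / s) := hx
      linarith
    have h1 : sInf S ≤ a := csInf_le ⟨b, hbl⟩ haS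
    have h2 : b ≤ sInf S := le_csInf ⟨a, haS⟩ hbl
    have ep : s * (cp / s) = cp := by field_simp
    have em : s * (cm / s) = cm := by field_simp
    have l1 : cm ≤ s * (sInf S - z₀) := by
      have := mul_le_mul_of_nonneg_left (sub_le_sub_right h2 z₀) hsN.le
      rw [hb] at this
      calc cm = s * (z₀ + cm / s - z₀) := by rw [add_sub_cancel_left, em]
        _ ≤ s * (sInf S - z₀) := this
    have l2 : s * (sInf S - z₀) ≤ cp := by
      have := mul_le_mul_of_nonneg_left (sub_le_sub_right h1 z₀) hsN.le
      calc s * (sInf S - z₀) ≤ s * (a - z₀) := this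
        _ = cp := by rw [ha, add_sub_cancel_left, ep]
    rw [Real.dist_eq]
    have : |s * (sInf S - z₀) - (1 - l) * ξ| ≤ ε / 2 :=
      abs_le.2 ⟨by rw [hcm] at l1; linarith, by rw [hcp] at l2; linarith⟩
    linarith
  exact eventually_atTop.mp H
end
end
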